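/- In the splitting algebra A_f of a monic degree-n polynomial f over A, the polynomial f splits completely: the image of f in A_f[t] equals (t - τ_1)(t - τ_2)...(t - τ_n), where τ_i are the universal roots. -/

import Mathlib

open MvPolynomial Polynomial

/-- The ideal `(s₁ - f₁, ..., sₙ - fₙ)` defining the splitting algebra, where
`fᵢ = (-1)^i · coeff f (n - i)` are the signed coefficients of `f`. -/
noncomputable def splittingIdeal (A : Type*) [CommRing A] (f : Polynomial A) (n : ℕ) :
    Ideal (MvPolynomial (Fin n) A) :=
  Ideal.span (Set.range fun i : Fin n =>
    esymm (Fin n) A ((i : ℕ) + 1) -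
      MvPolynomial.C ((-1 : A) ^ ((i : ℕ) + 1) * f.coeff (n - ((i : ℕ) + 1))))

/-- The splitting algebra `A_f = A[t₁,...,tₙ]/(s₁ - f₁, ..., sₙ - fₙ)`. -/
noncomputable def SplittingAlgebra (A : Type*) [CommRing A] (f : Polynomial A) (n : ℕ) :=
  MvPolynomial (Fin n) A ⧸ splittingIdeal A f n

noncomputable instance (A : Type*) [CommRing A] (f : Polynomial A) (n : ℕ) :
    CommRing (SplittingAlgebra A f n) := Ideal.Quotient.commRing _

noncomputable instance (R A : Type*) [CommSemiring R] [CommRing A] [Algebra R A]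
    (f : Polynomial A) (n : ℕ) : Algebra R (SplittingAlgebra A f n) :=
  Ideal.Quotient.algebra R

/-- The universal roots `τᵢ` of `f` in the splitting algebra. -/
noncomputable def univRoot (A : Type*) [CommRing A] (f : Polynomial A) (n : ℕ) (i : Fin n) :
    SplittingAlgebra A f n :=
  Ideal.Quotient.mk (splittingIdeal A f n) (MvPolynomial.X i)

/-- The action of a permutation `σ` on the splitting algebra, sending `τᵢ` to `τ_{σ⁻¹ i}`. -/
noncomputable def permHom (A : Type*) [CommRing A] (f : Polynomial A) (n : ℕ)
    (σ : Equiv.Perm (Fin n)) : SplittingAlgebra A f n →ₐ[A] SplittingAlgebra A f n :=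
  Ideal.Quotient.liftₐ (splittingIdeal A f n)
    ((Ideal.Quotient.mkₐ A (splittingIdeal A f n)).comp
      (rename (σ.symm : Fin n → Fin n)))
    (by
      intro a ha
      have h : splittingIdeal A f n ≤ RingHom.ker
          ((Ideal.Quotient.mkₐ A (splittingIdeal A f n)).comp
            (rename (σ.symm : Fin n → Fin n))) := by
        rw [splittingIdeal, Ideal.span_le]
        rintro _ ⟨i, rfl⟩
        have : (rename (σ.symm : Fin n → Fin n))
            (esymm (Fin n) A ((i : ℕ) + 1) -
              MvPolynomial.C ((-1 : A) ^ ((i : ℕ) + 1) * f.coeff (n - ((i : ℕ) + 1)))) =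
            esymm (Fin n) A ((i : ℕ) + 1) -
              MvPolynomial.C ((-1 : A) ^ ((i : ℕ) + 1) * f.coeff (n - ((i : ℕ) + 1))) := by
          rw [map_sub, rename_esymm, rename_C]
        simp only [SetLike.mem_coe, RingHom.mem_ker, AlgHom.coe_comp, Function.comp_apply, this]
        rw [Ideal.Quotient.mkₐ_eq_mk, Ideal.Quotient.eq_zero_iff_mem]
        exact Ideal.subset_span ⟨i, rfl⟩
      exact h ha)


-- key lemma: image of esymm m for 1 ≤ m ≤ n
lemma mk_esymm {A : Type*} [CommRing A] (f : Polynomial A) (n : ℕ) {m : ℕ}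
    (h1 : 1 ≤ m) (h2 : m ≤ n) :
    Ideal.Quotient.mk (splittingIdeal A f n) (esymm (Fin n) A m) =
      algebraMap A (SplittingAlgebra A f n) ((-1 : A) ^ m * f.coeff (n - m)) := by
  have hmem : esymm (Fin n) A m - MvPolynomial.C ((-1 : A) ^ m * f.coeff (n - m)) ∈
      splittingIdeal A f n := by
    have hi : m - 1 < n := by omega
    have := Ideal.subset_span (Set.mem_range_self (f := fun i : Fin n =>
      esymm (Fin n) A ((i : ℕ) + 1) -
        MvPolynomial.C ((-1 : A) ^ ((i : ℕ) + 1) * f.coeff (n - ((i : ℕ) + 1)))) ⟨m - 1, hi⟩)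
    simpa [splittingIdeal, Nat.sub_add_cancel h1] using this
  have := (Ideal.Quotient.eq (I := splittingIdeal A f n)).mpr hmem
  exact this.trans rfl

theorem splittingAlgebra_universalSplitting {A : Type*} [CommRing A]
    (f : Polynomial A) (n : ℕ) (hmonic : f.Monic) (hdeg : f.natDegree = n) :
    f.map (algebraMap A (SplittingAlgebra A f n)) =
      ∏ i : Fin n, (Polynomial.X - Polynomial.C (univRoot A f n i)) := by
  have hprod : (∏ i : Fin n, (Polynomial.X - Polynomial.C (univRoot A f n i))) =
      ((Finset.univ.val.map (univRoot A f n)).map fun t => Polynomial.X - Polynomial.C t).prod := by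
    rw [Multiset.map_map]; rfl
  have hcard : Multiset.card (Finset.univ.val.map (univRoot A f n)) = n := by
    simp
  ext k
  rw [Polynomial.coeff_map]
  rcases le_or_gt k n with hk | hk
  · rw [hprod, Multiset.prod_X_sub_C_coeff _ (by rw [hcard]; exact hk), hcard]
    have hesymm : (Finset.univ.val.map (univRoot A f n)).esymm (n - k) =
        Ideal.Quotient.mk (splittingIdeal A f n) (esymm (Fin n) A (n - k)) := by
      have h1 : MvPolynomial.aeval (R := A) (univRoot A f n) =
          (Ideal.Quotient.mkₐ A (splittingIdeal A f n)) := by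
        apply MvPolynomial.algHom_ext; intro i; simp only [MvPolynomial.aeval_X]; rfl
      have h2 := aeval_esymm_eq_multiset_esymm (Fin n) A (n - k) (univRoot A f n)
      rw [← h2, h1]; rfl
    rw [hesymm]
    rcases Nat.eq_or_lt_of_le hk with heq | hlt
    · subst heq
      rw [Nat.sub_self, pow_zero, esymm_zero, map_one,
        show f.coeff k = 1 from hdeg ▸ hmonic.coeff_natDegree, map_one]
      exact (one_mul _).symm
    · rw [mk_esymm f n (by omega) (by omega)]
      have : n - (n - k) = k := by omega
      rw [this, map_mul, map_pow, map_neg, map_one, ← mul_assoc, ← mul_pow,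
        neg_mul_neg, one_mul, one_pow, one_mul]
  · rw [Polynomial.coeff_eq_zero_of_natDegree_lt (by omega : f.natDegree < k), map_zero]
    symm
    apply Polynomial.coeff_eq_zero_of_natDegree_lt
    calc (∏ i : Fin n, (Polynomial.X - Polynomial.C (univRoot A f n i))).natDegree
        ≤ ∑ i : Fin n, (Polynomial.X - Polynomial.C (univRoot A f n i)).natDegree :=
          Polynomial.natDegree_prod_le _ _
      _ ≤ ∑ _i : Fin n, 1 :=
          Finset.sum_le_sum (f := fun i : Fin n =>
            (Polynomial.X - Polynomial.C (univRoot A f n i)).natDegree)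
            (fun i _ => Polynomial.natDegree_X_sub_C_le _)
      _ = n := by simp
      _ < k := hk
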